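/- Any valid sequence R of weighted operations transforming G1 into G2 satisfies W(R) ≥ (p1·Φ_g + p2·Φ)/Δ_max, where Φ = |π|+1−c(G1,G2), Φ_g = |π|+1−c_g(G1,G2), and Δ_max = max((p1+p2)/Wρ, 2(p1+p2)/Wτ, p1/Wδ). -/

import Mathlib

/-- The kinds of weighted operations: reversals, transpositions, indels. -/
inductive OpKind | rev | trans | indel

/-- The weight of an operation of each kind. -/
def opWeight (Wρ Wτ Wδ : ℝ) : OpKind → ℝ
  | .rev => Wρ
  | .trans => Wτ
  | .indel => Wδ

/-- Any valid sequence `R` of weighted operations transforming `G1` into `G2` satisfies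
`W(R) ≥ (p1·Φ_g + p2·Φ)/Δ_max`, where `Φ = |π|+1−c(G1,G2)`, `Φ_g = |π|+1−c_g(G1,G2)` and
`Δ_max = max((p1+p2)/Wρ, 2(p1+p2)/Wτ, p1/Wδ)`. Each element of `R` records its kind
together with the changes it causes to `Φ_g` and `Φ` (bounded by the per-kind bounds:
reversals change each potential by at most 1, transpositions by at most 2, indels change
`Φ_g` by at most 1 and `Φ` by at most 0); validity means that the changes, which add up
over the sequence, reduce the potentials `Φ_g` and `Φ` exactly to zero. -/
theorem stmt10 (Wρ Wτ Wδ p1 p2 Φ Φg : ℝ)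
    (hWρ : 0 < Wρ) (hWτ : 0 < Wτ) (hWδ : 0 < Wδ)
    (hp1 : 0 ≤ p1) (hp2 : 0 ≤ p2) (hp : ¬(p1 = 0 ∧ p2 = 0))
    (R : List (OpKind × ℝ × ℝ))
    (hrev : ∀ x ∈ R, x.1 = OpKind.rev → x.2.1 ≤ 1 ∧ x.2.2 ≤ 1)
    (htrans : ∀ x ∈ R, x.1 = OpKind.trans → x.2.1 ≤ 2 ∧ x.2.2 ≤ 2)
    (hindel : ∀ x ∈ R, x.1 = OpKind.indel → x.2.1 ≤ 1 ∧ x.2.2 ≤ 0)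
    (hvalidg : (R.map fun x => x.2.1).sum = Φg)
    (hvalid : (R.map fun x => x.2.2).sum = Φ) :
    (R.map fun x => opWeight Wρ Wτ Wδ x.1).sum ≥
      (p1 * Φg + p2 * Φ) / max (max ((p1 + p2) / Wρ) (2 * (p1 + p2) / Wτ)) (p1 / Wδ) := by
  set D := max (max ((p1 + p2) / Wρ) (2 * (p1 + p2) / Wτ)) (p1 / Wδ) with hDdef
  have hps : 0 < p1 + p2 := by
    rcases lt_or_eq_of_le hp1 with h1 | h1
    · linarith
    · rcases lt_or_eq_of_le hp2 with h2 | h2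
      · linarith
      · exact absurd ⟨h1.symm, h2.symm⟩ hp
  have hD : 0 < D := lt_of_lt_of_le (div_pos hps hWρ) (le_trans (le_max_left _ _) (le_max_left _ _))
  have key : p1 * Φg + p2 * Φ ≤ D * (R.map fun x => opWeight Wρ Wτ Wδ x.1).sum := by
    subst hvalidg hvalid
    induction R with
    | nil => simp
    | cons a R ih =>
      have ih' := ih (fun x hx => hrev x (List.mem_cons_of_mem a hx))
        (fun x hx => htrans x (List.mem_cons_of_mem a hx))
        (fun x hx => hindel x (List.mem_cons_of_mem a hx))
      simp only [List.map_cons, List.sum_cons, mul_add] at *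
      have head : p1 * a.2.1 + p2 * a.2.2 ≤ D * opWeight Wρ Wτ Wδ a.1 := by
        cases h : a.1 with
        | rev =>
          obtain ⟨h1, h2⟩ := hrev a List.mem_cons_self h
          have : p1 * a.2.1 + p2 * a.2.2 ≤ p1 + p2 := by nlinarith
          have hle : (p1 + p2) / Wρ ≤ D := le_trans (le_max_left _ _) (le_max_left _ _)
          have := (div_le_iff₀ hWρ).mp hle
          simp only [opWeight]; linarith
        | trans =>
          obtain ⟨h1, h2⟩ := htrans a List.mem_cons_self h
          have : p1 * a.2.1 + p2 * a.2.2 ≤ 2 * (p1 + p2) := by nlinarith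
          have hle : 2 * (p1 + p2) / Wτ ≤ D := le_trans (le_max_right _ _) (le_max_left _ _)
          have := (div_le_iff₀ hWτ).mp hle
          simp only [opWeight]; linarith
        | indel =>
          obtain ⟨h1, h2⟩ := hindel a List.mem_cons_self h
          have : p1 * a.2.1 + p2 * a.2.2 ≤ p1 := by nlinarith
          have hle : p1 / Wδ ≤ D := le_max_right _ _
          have := (div_le_iff₀ hWδ).mp hle
          simp only [opWeight]; linarith
      linarith
  rw [ge_iff_le, div_le_iff₀ hD]
  linarith
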